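/- Fix m>0, 0<q<p, N≥2, λ_i = (p/q)^i, w(n) = Γ(n+m/2)/(n! Γ(m/2)), and for K∈ℕ let μ^K be the probability measure on A_K = {η∈ℕ^N : ∑_{i=1}^N η_i = K} with μ^K(η) proportional to ∏_{i=1}^N w(η_i) λ_i^{η_i}. Let (η^K)_{K∈ℕ} be any sequence of ℕ^N-valued random variables on a common probability space such that η^K has law μ^K for each K. Then η^K_N / K → 1 almost surely as K→∞ (strong law of large numbers for the condensate site). -/

import Mathlib

open Filter Topology MeasureTheory

/-- The weights `w(n) = Γ(n+m/2)/(n! Γ(m/2))`. -/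
noncomputable def asipW (m : ℝ) (n : ℕ) : ℝ :=
  Real.Gamma (n + m / 2) / (n.factorial * Real.Gamma (m / 2))

/-- `λ_i = (p/q)^i` for site `i ∈ {1,…,N}` (here `i : Fin N` represents site `i+1`). -/
noncomputable def asipLam (p q : ℝ) {N : ℕ} (i : Fin N) : ℝ := (p / q) ^ ((i : ℕ) + 1)

/-- The canonical weight `∏_{i=1}^N w(η_i) λ_i^{η_i}` of a configuration `η`. -/
noncomputable def asipWeight (m p q : ℝ) {N : ℕ} (η : Fin N → ℕ) : ℝ :=
  ∏ i, asipW m (η i) * asipLam p q i ^ (η i)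

/-- The canonical partition function `Z(K) = ∑_{η ∈ A_K} ∏_i w(η_i) λ_i^{η_i}`. -/
noncomputable def asipZ (m p q : ℝ) (N K : ℕ) : ℝ :=
  ∑' η : {η : Fin N → ℕ // ∑ i, η i = K}, asipWeight m p q η.1


set_option maxHeartbeats 1000000

lemma asipW_zero (m : ℝ) (hm : 0 < m) : asipW m 0 = 1 := by
  have h := Real.Gamma_pos_of_pos (by linarith : (0:ℝ) < m/2)
  simp [asipW, div_self h.ne']

lemma asipW_pos (m : ℝ) (hm : 0 < m) (n : ℕ) : 0 < asipW m n := by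
  have h1 : (0:ℝ) < n + m/2 := by positivity
  have h2 := Real.Gamma_pos_of_pos h1
  have h3 := Real.Gamma_pos_of_pos (by linarith : (0:ℝ) < m/2)
  have h4 : (0:ℝ) < n.factorial := by positivity
  exact div_pos h2 (by positivity)

lemma asipW_succ (m : ℝ) (hm : 0 < m) (n : ℕ) :
    asipW m (n+1) = asipW m n * ((n + m/2)/(n+1)) := by
  have h1 : (0:ℝ) < n + m/2 := by positivity
  have : ((n+1 : ℕ) : ℝ) + m/2 = (↑n + m/2) + 1 := by push_cast; ring
  rw [asipW, asipW, this, Real.Gamma_add_one h1.ne', Nat.factorial_succ]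
  have h4 : (0:ℝ) < n.factorial := by positivity
  have h3 := Real.Gamma_pos_of_pos (by linarith : (0:ℝ) < m/2)
  field_simp
  push_cast
  ring

lemma asipW_le (m : ℝ) (hm : 0 < m) (n : ℕ) :
    asipW m n ≤ ((n:ℝ)+1) ^ (⌈m/2⌉₊) := by
  set c := ⌈m/2⌉₊ with hc
  induction n with
  | zero => simpa [asipW_zero m hm] using one_le_pow₀ (by norm_num : (1:ℝ) ≤ 0+1)
  | succ n ih =>
      rw [asipW_succ m hm]
      have hcast : ((n+1:ℕ):ℝ)+1 = (n:ℝ)+2 := by push_cast; ring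
      rw [hcast]
      have hn1 : (0:ℝ) < (n:ℝ)+1 := by positivity
      have hb : ((n:ℝ) + m/2)/((n:ℝ)+1) ≤ (((n:ℝ)+2)/((n:ℝ)+1)) ^ c := by
        have hinv : (0:ℝ) ≤ ((n:ℝ)+1)⁻¹ := by positivity
        have hber : 1 + (c:ℝ) * ((n:ℝ)+1)⁻¹ ≤ (1 + ((n:ℝ)+1)⁻¹) ^ c :=
          one_add_mul_le_pow (by linarith) c
        have hcm : m/2 ≤ (c:ℝ) := Nat.le_ceil _
        have h1 : ((n:ℝ) + m/2)/((n:ℝ)+1) ≤ 1 + (c:ℝ) * ((n:ℝ)+1)⁻¹ := by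
          rw [div_le_iff₀ hn1]; field_simp; nlinarith
        have h2 : (1 + ((n:ℝ)+1)⁻¹) = ((n:ℝ)+2)/((n:ℝ)+1) := by field_simp; ring
        calc ((n:ℝ) + m/2)/((n:ℝ)+1) ≤ 1 + (c:ℝ) * ((n:ℝ)+1)⁻¹ := h1
          _ ≤ (1 + ((n:ℝ)+1)⁻¹) ^ c := hber
          _ = (((n:ℝ)+2)/((n:ℝ)+1)) ^ c := by rw [h2]
      have hwpos := asipW_pos m hm n
      calc asipW m n * ((n + m/2)/(n+1))
          ≤ ((n:ℝ)+1)^c * ((((n:ℝ)+2)/((n:ℝ)+1)) ^ c) := by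
            apply mul_le_mul ih hb (by positivity) (by positivity)
        _ = ((n:ℝ)+2)^c := by rw [← mul_pow]; congr 1; field_simp

lemma asipW_ge (m : ℝ) (hm : 0 < m) (n : ℕ) :
    min (m/2) 1 / ((n:ℝ)+1)^2 ≤ asipW m n := by
  have ht : 0 < m/2 := by linarith
  have hmin : min (m/2) 1 ≤ m/2 := min_le_left _ _
  have hmin1 : min (m/2) 1 ≤ 1 := min_le_right _ _
  have hminpos : 0 < min (m/2) 1 := lt_min ht one_pos
  match n with
  | 0 => simpa [asipW_zero m hm] using by nlinarith
  | (k+1) =>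
    induction k with
    | zero =>
        have h1 : asipW m 1 = m/2 := by
          have h0 := asipW_succ m hm 0; rw [asipW_zero m hm] at h0; rw [h0]; simp
        rw [h1]
        rw [div_le_iff₀ (by positivity)]
        push_cast
        nlinarith
    | succ k ih =>
        have hk := ih
        rw [asipW_succ m hm]
        have key : min (m/2) 1 / ((↑(k+1+1):ℝ)+1)^2 ≤
            (min (m/2) 1 / ((↑(k+1):ℝ)+1)^2) * ((↑(k+1) + m/2)/(↑(k+1)+1)) := by
          push_cast
          rw [div_mul_div_comm, div_le_div_iff₀ (by positivity) (by positivity)]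
          have hka : (0:ℝ) ≤ (k:ℝ) := Nat.cast_nonneg k
          nlinarith [mul_nonneg hminpos.le (show (0:ℝ) ≤ (k:ℝ)^2+3*(k:ℝ)+1 by positivity),
            mul_nonneg (mul_pos hminpos ht).le (sq_nonneg ((k:ℝ)+3))]
        refine key.trans ?_
        apply mul_le_mul_of_nonneg_right hk
        have h1 : (0:ℝ) < (↑(k+1):ℝ)+1 := by positivity
        positivity

-- finiteness of constrained configurations
lemma asip_finite {N K : ℕ} (Q : (Fin N → ℕ) → Prop) (hQ : ∀ s, Q s → ∑ i, s i = K) :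
    Finite {s : Fin N → ℕ // Q s} := by
  have hinj : Function.Injective
      (fun v : {s : Fin N → ℕ // Q s} => (fun i => (⟨v.1 i, by
        have h1 : v.1 i ≤ ∑ j, v.1 j := Finset.single_le_sum (fun j _ => Nat.zero_le _) (Finset.mem_univ i)
        have := hQ v.1 v.2
        omega⟩ : Fin (K+1))) : {s : Fin N → ℕ // Q s} → (Fin N → Fin (K+1))) := by
    intro a b hab
    ext i
    have := congrFun hab i
    simpa [Fin.ext_iff] using this
  exact Finite.of_injective _ hinj

lemma asip_card {N K : ℕ} (Q : (Fin N → ℕ) → Prop) (hQ : ∀ s, Q s → ∑ i, s i = K) :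
    Nat.card {s : Fin N → ℕ // Q s} ≤ (K+1)^N := by
  have hinj : Function.Injective
      (fun v : {s : Fin N → ℕ // Q s} => (fun i => (⟨v.1 i, by
        have h1 : v.1 i ≤ ∑ j, v.1 j := Finset.single_le_sum (fun j _ => Nat.zero_le _) (Finset.mem_univ i)
        have := hQ v.1 v.2
        omega⟩ : Fin (K+1))) : {s : Fin N → ℕ // Q s} → (Fin N → Fin (K+1))) := by
    intro a b hab
    ext i
    have := congrFun hab i
    simpa [Fin.ext_iff] using this
  calc Nat.card {s : Fin N → ℕ // Q s} ≤ Nat.card (Fin N → Fin (K+1)) :=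
        Nat.card_le_card_of_injective _ hinj
    _ = (K+1)^N := by simp [Nat.card_fun]

lemma asipWeight_pos (m p q : ℝ) (hm : 0 < m) (hq : 0 < q) (hpq : q < p) {N : ℕ}
    (s : Fin N → ℕ) : 0 < asipWeight m p q s := by
  apply Finset.prod_pos
  intro i _
  have : 0 < p / q := div_pos (by linarith) hq
  exact mul_pos (asipW_pos m hm _) (pow_pos (pow_pos this _) _)

lemma asipZ_ge (m p q : ℝ) (hm : 0 < m) (hq : 0 < q) (hpq : q < p) (N K : ℕ) (hN : 2 ≤ N) :
    asipW m K * ((p/q)^N)^K ≤ asipZ m p q N K := by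
  haveI : Finite {s : Fin N → ℕ // ∑ i, s i = K} :=
    asip_finite (fun s => ∑ i, s i = K) (fun _ h => h)
  set N' : Fin N := ⟨N-1, by omega⟩ with hN'
  set δ : Fin N → ℕ := fun i => if i = N' then K else 0 with hδ
  have hδsum : ∑ i, δ i = K := by
    simp [hδ, Finset.sum_ite_eq']
  have hwδ : asipWeight m p q δ = asipW m K * ((p/q)^N)^K := by
    rw [asipWeight]
    rw [Finset.prod_eq_single N']
    · have hval : (N' : ℕ) = N - 1 := rfl
      have hlam : asipLam p q N' = (p/q)^N := by
        rw [asipLam, hval]; congr 1; omega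
      simp only [hδ, if_pos rfl, hlam]
    · intro i _ hi
      simp [hδ, hi, asipW_zero m hm]
    · intro h
      exact absurd (Finset.mem_univ N') h
  have hsumm : Summable (fun v : {s : Fin N → ℕ // ∑ i, s i = K} => asipWeight m p q v.1) :=
    Summable.of_finite
  have := hsumm.le_tsum ⟨δ, hδsum⟩ (fun j _ => (asipWeight_pos m p q hm hq hpq j.1).le)
  rw [hwδ] at this
  exact this

lemma asipWeight_le (m p q : ℝ) (hm : 0 < m) (hq : 0 < q) (hpq : q < p) {N : ℕ} (hN : 2 ≤ N)
    {K : ℕ} (s : Fin N → ℕ) (hs : ∑ i, s i = K) :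
    asipWeight m p q s ≤
      ((K:ℝ)+1)^(⌈m/2⌉₊ * N) * (p/q)^(N*K - (K - s ⟨N-1, by omega⟩)) := by
  set c := ⌈m/2⌉₊
  set N' : Fin N := ⟨N-1, by omega⟩
  have hr1 : (1:ℝ) ≤ p/q := by rw [le_div_iff₀ hq]; linarith
  have hr0 : (0:ℝ) < p/q := by linarith
  have hsi : ∀ i, s i ≤ K := by
    intro i
    have := Finset.single_le_sum (f := s) (fun j _ => Nat.zero_le _) (Finset.mem_univ i)
    omega
  rw [asipWeight, Finset.prod_mul_distrib]
  have h1 : ∏ i, asipW m (s i) ≤ ((K:ℝ)+1)^(c * N) := by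
    calc ∏ i, asipW m (s i) ≤ ∏ _i : Fin N, ((K:ℝ)+1)^c := by
          apply Finset.prod_le_prod (fun i _ => (asipW_pos m hm _).le)
          intro i _
          refine (asipW_le m hm (s i)).trans ?_
          apply pow_le_pow_left₀ (by positivity)
          have h := (Nat.cast_le (α:=ℝ)).mpr (hsi i); linarith
      _ = (((K:ℝ)+1)^c)^N := by rw [Finset.prod_const, Finset.card_univ, Fintype.card_fin]
      _ = ((K:ℝ)+1)^(c*N) := by rw [← pow_mul]
  have h2 : ∏ i, asipLam p q i ^ (s i) ≤ (p/q)^(N*K - (K - s N')) := by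
    have heq : ∏ i, asipLam p q i ^ (s i) = (p/q) ^ (∑ i : Fin N, ((i:ℕ)+1) * s i) := by
      rw [← Finset.prod_pow_eq_pow_sum Finset.univ (fun i : Fin N => ((i:ℕ)+1) * s i) (p/q)]
      exact Finset.prod_congr rfl (fun i _ => by rw [asipLam, ← pow_mul])
    rw [heq]
    apply pow_le_pow_right₀ hr1
    -- exponent bound
    have hsplit : ∑ i : Fin N, ((i:ℕ)+1) * s i
        = ∑ i ∈ Finset.univ.erase N', ((i:ℕ)+1) * s i + ((N':ℕ)+1) * s N' :=
      (Finset.sum_erase_add _ _ (Finset.mem_univ N')).symm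
    have herase : ∑ i ∈ Finset.univ.erase N', s i = K - s N' := by
      have := Finset.sum_erase_add Finset.univ s (Finset.mem_univ N')
      omega
    have hle : ∑ i ∈ Finset.univ.erase N', ((i:ℕ)+1) * s i
        ≤ (N-1) * (K - s N') := by
      calc ∑ i ∈ Finset.univ.erase N', ((i:ℕ)+1) * s i
          ≤ ∑ i ∈ Finset.univ.erase N', (N-1) * s i := by
            apply Finset.sum_le_sum
            intro i hi
            have hiv : (i:ℕ) < N := i.2
            have hne : (i:ℕ) ≠ N - 1 := by
              intro h
              exact (Finset.mem_erase.1 hi).1 (Fin.ext (by simpa using h))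
            exact Nat.mul_le_mul_right _ (by omega)
        _ = (N-1) * (K - s N') := by rw [← Finset.mul_sum, herase]
    have hvN : (N':ℕ) = N - 1 := rfl
    have hsN := hsi N'
    rw [hsplit, hvN]
    have : (N-1+1) = N := by omega
    rw [this]
    have hexp : (N-1) * (K - s N') + N * s N' = N*K - (K - s N') := by
      have hKD : K = s N' + (K - s N') := by omega
      have h1 : N*K = N*(s N') + N*(K - s N') := by
        conv_lhs => rw [hKD]
        rw [Nat.mul_add]
      have h2 : (N-1)*(K - s N') = N*(K - s N') - (K - s N') := by
        rw [Nat.sub_one_mul]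
      have h3 : (K - s N') ≤ N*(K - s N') := Nat.le_mul_of_pos_left _ (by omega)
      omega
    omega
  have hl0 : (0:ℝ) ≤ ∏ i, asipLam p q i ^ (s i) := by
    apply Finset.prod_nonneg
    intro i _
    exact pow_nonneg (pow_nonneg hr0.le _) _
  exact mul_le_mul h1 h2 hl0 (by positivity)

lemma asip_ratio (m p q : ℝ) (hm : 0 < m) (hq : 0 < q) (hpq : q < p) {N : ℕ} (hN : 2 ≤ N)
    (K : ℕ) (s : Fin N → ℕ) (hs : ∑ i, s i = K) :
    asipWeight m p q s / asipZ m p q N K ≤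
      (((K:ℝ)+1)^(⌈m/2⌉₊*N+2) / min (m/2) 1) * (((p/q)^(K - s ⟨N-1, by omega⟩))⁻¹) := by
  set c := ⌈m/2⌉₊
  set N' : Fin N := ⟨N-1, by omega⟩
  set r : ℝ := p/q with hrdef
  set d : ℕ := K - s N' with hd
  set c₀ : ℝ := min (m/2) 1 with hc₀
  have hc₀pos : 0 < c₀ := lt_min (by linarith) one_pos
  have hr1 : (1:ℝ) ≤ r := by rw [hrdef, le_div_iff₀ hq]; linarith
  have hr0 : (0:ℝ) < r := by linarith
  have hdNK : d ≤ N*K := by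
    have : s N' ≤ K := by
      have := Finset.single_le_sum (f := s) (fun j _ => Nat.zero_le _) (Finset.mem_univ N')
      omega
    have : K ≤ N*K := Nat.le_mul_of_pos_left _ (by omega)
    omega
  have hA : asipWeight m p q s ≤ ((K:ℝ)+1)^(c*N) * r^(N*K - d) :=
    asipWeight_le m p q hm hq hpq hN s hs
  have hB : (c₀/((K:ℝ)+1)^2) * r^(N*K) ≤ asipZ m p q N K := by
    have h1 := asipZ_ge m p q hm hq hpq N K hN
    have h2 := asipW_ge m hm K
    have h3 : ((r:ℝ)^N)^K = r^(N*K) := by rw [← pow_mul]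
    calc (c₀/((K:ℝ)+1)^2) * r^(N*K) ≤ asipW m K * r^(N*K) := by
          apply mul_le_mul_of_nonneg_right h2 (by positivity)
      _ = asipW m K * ((r:ℝ)^N)^K := by rw [h3]
      _ ≤ asipZ m p q N K := h1
  have hBpos : 0 < (c₀/((K:ℝ)+1)^2) * r^(N*K) := by positivity
  have step : asipWeight m p q s / asipZ m p q N K ≤
      (((K:ℝ)+1)^(c*N) * r^(N*K - d)) / ((c₀/((K:ℝ)+1)^2) * r^(N*K)) :=
    div_le_div₀ (by positivity) hA hBpos hB
  refine step.trans (le_of_eq ?_)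
  have hsplit : r^(N*K) = r^(N*K - d) * r^d := by
    rw [← pow_add]; congr 1; omega
  rw [hsplit, pow_add]
  have hX : (0:ℝ) < r^(N*K-d) := by positivity
  have hK1 : (0:ℝ) < ((K:ℝ)+1) := by positivity
  have hrd : (0:ℝ) < r^d := by positivity
  field_simp

/-- **Strong law of large numbers for the condensate site of the ASIP**: if for each `K`
the random variable `η^K` has the canonical law `μ^K` (supported on `A_K`, with
`μ^K(η) = Z(K)⁻¹ ∏_i w(η_i) λ_i^{η_i}`), all on a common probability space, then
`η^K_N / K → 1` almost surely as `K → ∞`. -/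
theorem asip_condensation_slln
    (m p q : ℝ) (hm : 0 < m) (hq : 0 < q) (hpq : q < p)
    (N : ℕ) (hN : 2 ≤ N)
    {Ω : Type*} [MeasurableSpace Ω] (P : Measure Ω) [IsProbabilityMeasure P]
    (η : ℕ → Ω → (Fin N → ℕ))
    (hlaw : ∀ K : ℕ, ∀ s : Fin N → ℕ,
      P {ω | η K ω = s} =
        ENNReal.ofReal
          (if ∑ i, s i = K then asipWeight m p q s / asipZ m p q N K else 0)) :
    ∀ᵐ ω ∂P,
      Tendsto (fun K : ℕ => ((η K ω ⟨N - 1, by omega⟩ : ℕ) : ℝ) / K) atTop (𝓝 1) := by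
  set N' : Fin N := ⟨N - 1, by omega⟩ with hN'def
  set r : ℝ := p/q with hrdef
  have hr1 : (1:ℝ) < r := by rw [hrdef, lt_div_iff₀ hq]; linarith
  have hr0 : (0:ℝ) < r := by linarith
  set c₀ : ℝ := min (m/2) 1 with hc₀
  have hc₀pos : 0 < c₀ := lt_min (by linarith) one_pos
  set c : ℕ := ⌈m/2⌉₊ with hc
  set A : ℕ := N + (c*N+2) with hA
  -- null sets for the Borel-Cantelli argument
  have key : ∀ M : ℕ, ∀ᵐ ω ∂P, ∀ᶠ K in atTop,
      (M+1) * (K - η K ω N') ≤ K ∧ ∑ i, η K ω i = K := by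
    intro M
    set θ : ℝ := r ^ (-(1/((M:ℝ)+1))) with hθ
    have hθpos : 0 < θ := Real.rpow_pos_of_pos hr0 _
    have hθlt : θ < 1 := Real.rpow_lt_one_of_one_lt_of_neg hr1 (by positivity |> neg_neg_iff_pos.mpr)
    set g : ℕ → ℝ := fun K => c₀⁻¹ * (((K:ℝ)+1)^A * θ^K) with hg
    have hgnonneg : ∀ K, 0 ≤ g K := by
      intro K
      have := hθpos.le
      positivity
    set B : ℕ → Set Ω := fun K =>
      {ω | ¬((M+1) * (K - η K ω N') ≤ K ∧ ∑ i, η K ω i = K)} with hB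
    have hPB : ∀ K, P (B K) ≤ ENNReal.ofReal (g K) := by
      intro K
      classical
      set Bad := {s : Fin N → ℕ // ∑ i, s i = K ∧ ¬((M+1) * (K - s N') ≤ K)} with hBad
      haveI : Finite Bad := asip_finite _ (fun s h => h.1)
      haveI : Fintype Bad := Fintype.ofFinite _
      have hcover : B K ⊆ (⋃ v : Bad, {ω | η K ω = v.1}) ∪ {ω | ∑ i, η K ω i ≠ K} := by
        intro ω hω
        by_cases hsum : ∑ i, η K ω i = K
        · left
          refine Set.mem_iUnion.2 ⟨⟨η K ω, hsum, fun hcon => hω ⟨hcon, hsum⟩⟩, rfl⟩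
        · right; exact hsum
      have hnull : P {ω | ∑ i, η K ω i ≠ K} = 0 := by
        have hsub : {ω | ∑ i, η K ω i ≠ K} ⊆
            ⋃ v : {s : Fin N → ℕ // ∑ i, s i ≠ K}, {ω | η K ω = v.1} :=
          fun ω hω => Set.mem_iUnion.2 ⟨⟨η K ω, hω⟩, rfl⟩
        refine le_antisymm ?_ zero_le
        refine le_trans (measure_mono hsub) ?_
        refine le_trans (measure_iUnion_le _) ?_
        have hz : ∀ v : {s : Fin N → ℕ // ∑ i, s i ≠ K}, P {ω | η K ω = v.1} = 0 := by
          intro v; rw [hlaw K v.1, if_neg v.2]; simp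
        simp [hz]
      set b : ℝ := (((K:ℝ)+1)^(c*N+2) / c₀) * θ^K with hb
      have hbnonneg : 0 ≤ b := by
        have := hθpos.le
        positivity
      have hterm : ∀ v : Bad, P {ω | η K ω = v.1} ≤ ENNReal.ofReal b := by
        intro v
        rw [hlaw K v.1, if_pos v.2.1]
        apply ENNReal.ofReal_le_ofReal
        have hd : K < (M+1) * (K - v.1 N') := Nat.lt_of_not_le v.2.2
        set d := K - v.1 N' with hdd
        have hratio := asip_ratio m p q hm hq hpq hN K v.1 v.2.1
        have hgeo : ((r:ℝ)^d)⁻¹ ≤ θ^K := by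
          have e1 : ((r:ℝ)^d)⁻¹ = r ^ (-(d:ℝ)) := by
            rw [← Real.rpow_natCast r d, ← Real.rpow_neg hr0.le]
          have e2 : θ^K = r ^ (-((K:ℝ)/((M:ℝ)+1))) := by
            rw [hθ, ← Real.rpow_natCast (r ^ (-(1/((M:ℝ)+1)))) K, ← Real.rpow_mul hr0.le]
            congr 1; ring
          rw [e1, e2]
          apply (Real.rpow_le_rpow_left_iff hr1).mpr
          have hKd : (K:ℝ) ≤ (d:ℝ)*((M:ℝ)+1) := by
            have h' : K ≤ (M+1)*d := Nat.le_of_lt hd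
            have h'' := (Nat.cast_le (α := ℝ)).mpr h'
            push_cast at h''
            rw [mul_comm]
            exact h''
          have : (K:ℝ)/((M:ℝ)+1) ≤ (d:ℝ) := by
            rw [div_le_iff₀ (by positivity)]
            exact hKd
          linarith
        refine hratio.trans ?_
        rw [hb]
        have hc1 : (0:ℝ) ≤ ((K:ℝ)+1)^(c*N+2) / c₀ := by positivity
        exact mul_le_mul_of_nonneg_left hgeo hc1
      have hcard : (Fintype.card Bad : ENNReal) ≤ (((K+1)^N : ℕ) : ENNReal) := by
        have := asip_card (N := N) (K := K)
          (fun s => ∑ i, s i = K ∧ ¬((M+1) * (K - s N') ≤ K)) (fun s h => h.1)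
        rw [Nat.card_eq_fintype_card] at this
        exact_mod_cast this
      calc P (B K) ≤ P (⋃ v : Bad, {ω | η K ω = v.1}) + P {ω | ∑ i, η K ω i ≠ K} :=
            le_trans (measure_mono hcover) (measure_union_le _ _)
        _ = P (⋃ v : Bad, {ω | η K ω = v.1}) := by rw [hnull, add_zero]
        _ ≤ ∑' v : Bad, P {ω | η K ω = v.1} := measure_iUnion_le _
        _ = ∑ v : Bad, P {ω | η K ω = v.1} := tsum_fintype _
        _ ≤ Fintype.card Bad • ENNReal.ofReal b := by
            simpa using Finset.sum_le_card_nsmul Finset.univ _ _ (fun v _ => hterm v)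
        _ = (Fintype.card Bad : ENNReal) * ENNReal.ofReal b := by rw [nsmul_eq_mul]
        _ ≤ (((K+1)^N : ℕ) : ENNReal) * ENNReal.ofReal b :=
            mul_le_mul_left hcard _
        _ = ENNReal.ofReal ((((K+1)^N : ℕ) : ℝ) * b) := by
            rw [← ENNReal.ofReal_natCast ((K+1)^N), ← ENNReal.ofReal_mul (by positivity)]
        _ ≤ ENNReal.ofReal (g K) := by
            apply ENNReal.ofReal_le_ofReal
            apply le_of_eq
            rw [hg, hb, hA, pow_add]
            push_cast
            field_simp
            ring
    have hgsum : Summable g := by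
      have h0 : Summable (fun n : ℕ => (n:ℝ)^A * θ^n) :=
        summable_pow_mul_geometric_of_norm_lt_one A (by
          rw [Real.norm_eq_abs, abs_of_pos hθpos]; exact hθlt)
      have h1 : Summable (fun n : ℕ => ((n+1:ℕ):ℝ)^A * θ^(n+1)) :=
        (summable_nat_add_iff (f := fun n : ℕ => (n:ℝ)^A * θ^n) 1).mpr h0
      have h2 : Summable (fun n : ℕ => ((n:ℝ)+1)^A * θ^n) := by
        refine (h1.mul_left θ⁻¹).congr (fun n => ?_)
        push_cast
        rw [pow_succ]
        field_simp
      exact h2.mul_left _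
    have htsum : (∑' K, P (B K)) ≠ ⊤ := by
      refine ne_top_of_le_ne_top ?_ (ENNReal.tsum_le_tsum hPB)
      rw [← ENNReal.ofReal_tsum_of_nonneg hgnonneg hgsum]
      exact ENNReal.ofReal_ne_top
    have := ae_eventually_notMem htsum
    filter_upwards [this] with ω hω
    filter_upwards [hω] with K hK
    simpa [hB] using hK
  -- combine over M and conclude
  rw [← ae_all_iff] at key
  filter_upwards [key] with ω hω
  rw [Metric.tendsto_atTop]
  intro ε hε
  obtain ⟨M, hM⟩ := exists_nat_one_div_lt hε
  obtain ⟨K₀, hK₀⟩ := (eventually_atTop).1 (hω M)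
  refine ⟨max K₀ 1, fun K hK => ?_⟩
  have hK1 : 1 ≤ K := le_trans (le_max_right _ _) hK
  have hKK : (0:ℝ) < K := by exact_mod_cast hK1
  obtain ⟨h1, h2⟩ := hK₀ K (le_trans (le_max_left _ _) hK)
  have hsN : η K ω N' ≤ K := by
    have := Finset.single_le_sum (f := η K ω) (fun j _ => Nat.zero_le _) (Finset.mem_univ N')
    omega
  have hcast : ((K - η K ω N' : ℕ) : ℝ) = (K:ℝ) - (η K ω N' : ℕ) := by
    push_cast [Nat.cast_sub hsN]; ring
  have hreal : (K:ℝ) - (η K ω N' : ℕ) ≤ (K:ℝ)/((M:ℝ)+1) := by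
    rw [← hcast, div_eq_inv_mul, le_inv_mul_iff₀ (by positivity)]
    exact_mod_cast h1
  have hub : ((η K ω N' : ℕ) : ℝ)/K ≤ 1 := by
    rw [div_le_one hKK]; exact_mod_cast hsN
  have hlb : 1 - 1/((M:ℝ)+1) ≤ ((η K ω N' : ℕ) : ℝ)/K := by
    rw [sub_le_iff_le_add] at hreal
    rw [le_div_iff₀ hKK]
    have hexp : (1 - 1/((M:ℝ)+1)) * K = K - (K:ℝ)/((M:ℝ)+1) := by ring
    rw [hexp]
    linarith
  rw [Real.dist_eq, abs_sub_lt_iff]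
  constructor
  · linarith
  · have : 1/((M:ℝ)+1) < ε := hM
    linarith
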